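/- arXiv:2306.15901 — 3 statements merged into one kernel-verified Lean document; each statement's English description precedes it below -/
import Mathlib

section
/- For complex numbers u, v with |u| ≥ |v| > 0, the function f(z) = z·ln|z| satisfies |f(u) - f(v)| ≤ (|ln|u|| + 1)·|u - v|. -/
noncomputable def f (z : ℂ) : ℂ := z * Real.log (‖z‖)

theorem stmt_0 (u v : ℂ) (h1 : ‖v‖ > 0) (h2 : ‖u‖ ≥ ‖v‖) :
    ‖f u - f v‖ ≤ (|Real.log (‖u‖)| + 1) * ‖u - v‖ := by
  have hu : ‖u‖ > 0 := lt_of_lt_of_le h1 h2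
  set a := Real.log (‖u‖) with ha
  set b := Real.log (‖v‖) with hb
  have hkey : f u - f v = (u - v) * (a : ℂ) + v * ((a : ℂ) - (b : ℂ)) := by
    simp only [f]; ring
  rw [hkey]
  have hab : b ≤ a := Real.log_le_log h1 h2
  have h3 : ‖v * ((a : ℂ) - (b : ℂ))‖ ≤ ‖u - v‖ := by
    rw [norm_mul]
    have : ((a : ℂ) - (b : ℂ)) = ((a - b : ℝ) : ℂ) := by push_cast; ring
    rw [this, Complex.norm_real, Real.norm_eq_abs, abs_of_nonneg (by linarith)]
    have hlog : a - b = Real.log (‖u‖ / ‖v‖) := by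
      rw [Real.log_div (ne_of_gt hu) (ne_of_gt h1)]
    have hle : a - b ≤ ‖u‖ / ‖v‖ - 1 := by
      rw [hlog]
      exact Real.log_le_sub_one_of_pos (div_pos hu h1)
    have h4 : ‖v‖ * (a - b) ≤ ‖u‖ - ‖v‖ := by
      have := mul_le_mul_of_nonneg_left hle (le_of_lt h1)
      calc ‖v‖ * (a - b) ≤ ‖v‖ * (‖u‖ / ‖v‖ - 1) := this
        _ = ‖u‖ - ‖v‖ := by field_simp
    have h5 : ‖u‖ - ‖v‖ ≤ ‖u - v‖ :=
      norm_sub_norm_le u v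
    linarith
  calc ‖(u - v) * (a : ℂ) + v * ((a : ℂ) - (b : ℂ))‖
      ≤ ‖(u - v) * (a : ℂ)‖ + ‖v * ((a : ℂ) - (b : ℂ))‖ :=
        norm_add_le _ _
    _ ≤ ‖u - v‖ * |a| + ‖u - v‖ := by
        rw [norm_mul, Complex.norm_real, Real.norm_eq_abs]; linarith
    _ = (|a| + 1) * ‖u - v‖ := by ring
end

section
/- Let α ∈ (0,1) and δ_α = exp(α/(α-1)). If u, v ∈ ℂ satisfy |u|, |v| ≤ ε for some ε with 0 < ε ≤ δ_α, then |f(u) - f(v)| ≤ (2ε)^{1-α}(|ln ε| + 1)·|u - v|^α, where f(z) = z·ln|z| with f(0) = 0. -/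
lemma mono_aux (α : ℝ) (hα : α ∈ Set.Ioo (0:ℝ) 1) (t ε : ℝ) (ht : 0 < t) (htε : t ≤ ε)
    (hεδ : ε ≤ Real.exp (α/(α-1))) :
    t ^ (1-α) * (1 - Real.log t) ≤ ε ^ (1-α) * (1 - Real.log ε) := by
  have hεpos : 0 < ε := lt_of_lt_of_le ht htε
  have h1α : 0 < 1 - α := by linarith [hα.2]
  set r : ℝ := t / ε with hr
  have hr0 : 0 < r := div_pos ht hεpos
  have hr1 : r ≤ 1 := (div_le_one hεpos).mpr htε
  set s : ℝ := r ^ (1-α) with hs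
  have hs0 : 0 < s := Real.rpow_pos_of_pos hr0 _
  have hs1 : s ≤ 1 := Real.rpow_le_one hr0.le hr1 h1α.le
  have hlogs : Real.log s = (1-α) * Real.log r := Real.log_rpow hr0 _
  have hkey : -(s * Real.log s) ≤ 1 - s := by
    have := Real.log_le_sub_one_of_pos (show (0:ℝ) < s⁻¹ by positivity)
    rw [Real.log_inv] at this
    have h2 : -Real.log s ≤ s⁻¹ - 1 := this
    nlinarith [mul_le_mul_of_nonneg_left h2 hs0.le, mul_inv_cancel₀ hs0.ne']
  have hlogε : Real.log ε ≤ α/(α-1) := (Real.log_le_iff_le_exp hεpos).mpr hεδ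
  have hA : 1/(1-α) ≤ 1 - Real.log ε := by
    have : α/(α-1) = -(α/(1-α)) := by
      rw [show α-1 = -(1-α) by ring, div_neg]
    rw [this] at hlogε
    have : 1 + α/(1-α) = 1/(1-α) := by field_simp; ring
    linarith
  have hcore : s * ((1 - Real.log ε) - Real.log r) ≤ 1 - Real.log ε := by
    have hlr : Real.log r = Real.log s / (1-α) := by rw [hlogs]; field_simp
    have h3 : -(s * Real.log r) ≤ (1-s) / (1-α) := by
      rw [hlr, show -(s * (Real.log s / (1-α))) = (-(s * Real.log s))/(1-α) by ring]
      exact div_le_div_of_nonneg_right hkey h1α.le |>.trans_eq rfl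
    have h4 : (1-s)/(1-α) ≤ (1-s) * (1 - Real.log ε) := by
      rw [div_eq_mul_inv, ← one_div]
      exact mul_le_mul_of_nonneg_left hA (by linarith)
    nlinarith
  have htεr : t = ε * r := by rw [hr]; field_simp
  rw [htεr, Real.mul_rpow hεpos.le hr0.le, Real.log_mul hεpos.ne' hr0.ne']
  have hεp : (0:ℝ) < ε ^ (1-α) := Real.rpow_pos_of_pos hεpos _
  calc ε ^ (1-α) * s * (1 - (Real.log ε + Real.log r))
      = ε ^ (1-α) * (s * ((1 - Real.log ε) - Real.log r)) := by ring
    _ ≤ ε ^ (1-α) * (1 - Real.log ε) := mul_le_mul_of_nonneg_left hcore hεp.le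

lemma key_lem (α : ℝ) (hα : α ∈ Set.Ioo (0:ℝ) 1) (ε : ℝ)
    (hε : 0 < ε) (hεδ : ε ≤ Real.exp (α / (α - 1)))
    (u v : ℂ) (hu : ‖u‖ ≤ ε) (hv : ‖v‖ ≤ ε)
    (hvu : ‖v‖ ≤ ‖u‖)
    (mono : ∀ t, 0 < t → t ≤ ε →
      t ^ (1-α) * (1 - Real.log t) ≤ ε ^ (1-α) * (1 - Real.log ε)) :
    ‖f u - f v‖ ≤
      (2 * ε) ^ (1 - α) * (|Real.log ε| + 1) * ‖u - v‖ ^ α := by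
  have hα0 := hα.1
  have hα1 := hα.2
  have hε1 : ε < 1 := lt_of_le_of_lt hεδ (Real.exp_lt_one_iff.mpr
    (div_neg_of_pos_of_neg hα0 (by linarith)))
  have hlogε_neg : Real.log ε < 0 := Real.log_neg hε hε1
  have habsε : |Real.log ε| = -Real.log ε := abs_of_neg hlogε_neg
  by_cases huv : u = v
  · subst huv
    simp [Real.zero_rpow (ne_of_gt hα0)]
  · set d := ‖u - v‖ with hd
    have hd0 : 0 < d := by
      simpa [hd] using (norm_pos_iff.mpr (sub_ne_zero.mpr huv))
    have hsum : d ≤ ‖u‖ + ‖v‖ := by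
      simpa [hd] using norm_sub_le u v
    have hdu : d / 2 ≤ ‖u‖ := by linarith
    have hdε : d ≤ 2 * ε := by linarith
    have habsu : 0 < ‖u‖ := by linarith
    have hu0 : u ≠ 0 := by
      intro h; rw [h] at habsu; simp at habsu
    -- decomposition
    have hdecomp : f u - f v = (u - v) * ((Real.log (‖u‖) : ℝ) : ℂ)
        + v * (((Real.log (‖u‖) : ℝ) : ℂ) - ((Real.log (‖v‖) : ℝ) : ℂ)) := by
      simp only [f]; ring
    have hlogu_le : Real.log (‖u‖) ≤ Real.log ε := Real.log_le_log habsu hu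
    have hlogu_ge : Real.log (d/2) ≤ Real.log (‖u‖) :=
      Real.log_le_log (by linarith) hdu
    have hlogu_neg : Real.log (‖u‖) < 0 := lt_of_le_of_lt hlogu_le hlogε_neg
    have habs_logu : |Real.log (‖u‖)| ≤ -Real.log (d/2) := by
      rw [abs_of_neg hlogu_neg]; linarith
    -- term 2 bound
    have hterm2 : ‖v‖ * |Real.log (‖u‖) - Real.log (‖v‖)| ≤ d := by
      by_cases hv0 : v = 0
      · simp [hv0, hd0.le]
      · have habsv : 0 < ‖v‖ := norm_pos_iff.mpr hv0
        have hdiff : Real.log (‖u‖) - Real.log (‖v‖)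
            = Real.log (‖u‖ / ‖v‖) :=
          (Real.log_div habsu.ne' habsv.ne').symm
        have hratio1 : 1 ≤ ‖u‖ / ‖v‖ := (one_le_div habsv).mpr hvu
        have hlognn : 0 ≤ Real.log (‖u‖ / ‖v‖) :=
          Real.log_nonneg hratio1
        have hloglt : Real.log (‖u‖ / ‖v‖)
            ≤ ‖u‖ / ‖v‖ - 1 :=
          Real.log_le_sub_one_of_pos (by positivity)
        rw [hdiff, abs_of_nonneg hlognn]
        have : ‖v‖ * (‖u‖ / ‖v‖ - 1)
            = ‖u‖ - ‖v‖ := by field_simp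
        have hstep : ‖v‖ * Real.log (‖u‖ / ‖v‖)
            ≤ ‖u‖ - ‖v‖ := by
          calc ‖v‖ * Real.log (‖u‖ / ‖v‖)
              ≤ ‖v‖ * (‖u‖ / ‖v‖ - 1) :=
                mul_le_mul_of_nonneg_left hloglt habsv.le
            _ = ‖u‖ - ‖v‖ := this
        have hsub : ‖u‖ - ‖v‖ ≤ d := by
          simpa [hd] using norm_sub_norm_le u v
        linarith
    -- main abs bound
    have hmain : ‖f u - f v‖ ≤ d * (1 - Real.log (d/2)) := by
      calc ‖f u - f v‖
          ≤ ‖(u - v) * ((Real.log (‖u‖) : ℝ) : ℂ)‖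
            + ‖v * (((Real.log (‖u‖) : ℝ) : ℂ)
              - ((Real.log (‖v‖) : ℝ) : ℂ))‖ := by
            rw [hdecomp]; exact norm_add_le _ _
        _ = d * |Real.log (‖u‖)|
            + ‖v‖ * |Real.log (‖u‖) - Real.log (‖v‖)| := by
            rw [norm_mul, norm_mul, ← Complex.ofReal_sub, Complex.norm_real, Complex.norm_real,
              Real.norm_eq_abs, Real.norm_eq_abs]
        _ ≤ d * (-Real.log (d/2)) + d := by
            have := mul_le_mul_of_nonneg_left habs_logu hd0.le
            linarith
        _ = d * (1 - Real.log (d/2)) := by ring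
    -- final step
    set t := d / 2 with ht
    have ht0 : 0 < t := by positivity
    have htε : t ≤ ε := by simp only [ht]; linarith
    have hmono := mono t ht0 htε
    have hlogt_neg : Real.log t < 0 := Real.log_neg ht0 (by linarith)
    have h1logt : 0 < 1 - Real.log t := by linarith
    have h2t : (0:ℝ) < 2 * t := by linarith
    have hsplit : (2*t : ℝ) = (2*t) ^ α * (2*t) ^ (1-α) := by
      rw [← Real.rpow_add h2t]; simp
    have hdα : d ^ α = (2*t) ^ α := by rw [show (2:ℝ)*t = d by rw [ht]; ring]
    have hrw2t : ((2*t):ℝ) ^ (1-α) = 2 ^ (1-α) * t ^ (1-α) :=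
      Real.mul_rpow (by norm_num) ht0.le
    have hrw2ε : ((2*ε):ℝ) ^ (1-α) = 2 ^ (1-α) * ε ^ (1-α) :=
      Real.mul_rpow (by norm_num) hε.le
    have hfin : d * (1 - Real.log (d/2))
        ≤ (2 * ε) ^ (1 - α) * (|Real.log ε| + 1) * d ^ α := by
      rw [habsε, hdα, hrw2ε]
      rw [show d = 2 * t by rw [ht]; ring, show (2:ℝ) * t / 2 = t by ring]
      calc 2 * t * (1 - Real.log t)
          = (2*t) ^ α * ((2*t) ^ (1-α) * (1 - Real.log t)) := by
            rw [← mul_assoc, ← hsplit]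
        _ = (2*t) ^ α * (2 ^ (1-α) * (t ^ (1-α) * (1 - Real.log t))) := by
            rw [hrw2t]; ring
        _ ≤ (2*t) ^ α * (2 ^ (1-α) * (ε ^ (1-α) * (1 - Real.log ε))) := by
            apply mul_le_mul_of_nonneg_left _ (by positivity)
            exact mul_le_mul_of_nonneg_left hmono (by positivity)
        _ = 2 ^ (1-α) * ε ^ (1-α) * (-Real.log ε + 1) * (2*t) ^ α := by ring
    exact hmain.trans hfin

theorem stmt_2 (α : ℝ) (hα : α ∈ Set.Ioo (0:ℝ) 1) (ε : ℝ)
    (hε : 0 < ε) (hεδ : ε ≤ Real.exp (α / (α - 1)))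
    (u v : ℂ) (hu : ‖u‖ ≤ ε) (hv : ‖v‖ ≤ ε) :
    ‖f u - f v‖ ≤
      (2 * ε) ^ (1 - α) * (|Real.log ε| + 1) * ‖u - v‖ ^ α := by
  have mono : ∀ t, 0 < t → t ≤ ε →
      t ^ (1-α) * (1 - Real.log t) ≤ ε ^ (1-α) * (1 - Real.log ε) :=
    fun t ht htε => mono_aux α hα t ε ht htε hεδ
  rcases le_total (‖v‖) (‖u‖) with h | h
  · exact key_lem α hα ε hε hεδ u v hu hv h mono
  · have h1 := key_lem α hα ε hε hεδ v u hv hu h mono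
    rwa [show f v - f u = -(f u - f v) by ring, norm_neg,
      show v - u = -(u - v) by ring, norm_neg] at h1
end

section
/- Let α ∈ (0,1) and let u, v ∈ ℂ with |u| ≥ |v| ≥ 0 and |u| > 0. Then |f(u) - f(v)| ≤ (|ln|u|| + 1)·(2|u|)^{1-α}·|u-v|^α, where f(z) = z·ln|z| with f(0)=0. -/
theorem stmt_14 (α : ℝ) (hα : α ∈ Set.Ioo (0:ℝ) 1) (u v : ℂ)
    (huv : ‖v‖ ≤ ‖u‖) (hu : 0 < ‖u‖) :
    ‖f u - f v‖ ≤
      (|Real.log (‖u‖)| + 1) * (2 * ‖u‖) ^ (1 - α) *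
        ‖u - v‖ ^ α := by
  obtain ⟨hα0, hα1⟩ := hα
  set a := ‖u‖ with ha
  set b := ‖v‖ with hb
  set d := ‖u - v‖ with hd
  by_cases huv0 : u = v
  · simp [huv0, hd, f]
    positivity
  have hd0 : 0 < d := by
    rw [hd]
    simpa [sub_eq_zero] using huv0
  -- Step 1: |f u - f v| ≤ (|log a| + 1) * d
  have key : ‖f u - f v‖ ≤ (|Real.log a| + 1) * d := by
    have hsplit : f u - f v = (u - v) * Real.log a + v * ((Real.log a : ℂ) - Real.log b) := by
      simp only [f, ← ha, ← hb]; ring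
    have h1 : ‖(u - v) * (Real.log a : ℂ)‖ = d * |Real.log a| := by
      simp [hd]
    have h2 : ‖v * ((Real.log a : ℂ) - Real.log b)‖ ≤ d := by
      by_cases hv : v = 0
      · simp [hv]; positivity
      · have hb0 : 0 < b := by simpa [hb] using norm_pos_iff.mpr hv
        have hlog : Real.log b ≤ Real.log a := Real.log_le_log hb0 huv
        have habs : ‖(Real.log a : ℂ) - Real.log b‖ = Real.log a - Real.log b := by
          rw [← Complex.ofReal_sub, Complex.norm_real, Real.norm_eq_abs, abs_of_nonneg (by linarith)]
        rw [norm_mul, habs, ← hb]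
        have hle : Real.log a - Real.log b ≤ a / b - 1 := by
          have := Real.log_le_sub_one_of_pos (show 0 < a / b by positivity)
          rwa [Real.log_div (ne_of_gt hu) (ne_of_gt hb0)] at this
        have : b * (Real.log a - Real.log b) ≤ a - b := by
          have := mul_le_mul_of_nonneg_left hle hb0.le
          calc b * (Real.log a - Real.log b) ≤ b * (a / b - 1) := this
            _ = a - b := by field_simp
        have hab : a - b ≤ d := (le_abs_self _).trans (abs_norm_sub_norm_le u v)
        linarith
    calc ‖f u - f v‖
        ≤ ‖(u - v) * (Real.log a : ℂ)‖ +
          ‖v * ((Real.log a : ℂ) - Real.log b)‖ := by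
          rw [hsplit]; exact norm_add_le _ _
      _ ≤ d * |Real.log a| + d := by rw [h1]; linarith
      _ = (|Real.log a| + 1) * d := by ring
  -- Step 2: d ≤ (2a)^(1-α) * d^α
  have hd2a : d ≤ 2 * a := by
    have := norm_sub_le_norm_sub_add_norm_sub u 0 v
    simp only [sub_zero, zero_sub, norm_neg] at this
    linarith
  have hstep : d ≤ (2 * a) ^ (1 - α) * d ^ α := by
    have : d = d ^ (1 - α) * d ^ α := by
      rw [← Real.rpow_add hd0]; simp
    nth_rewrite 1 [this]
    exact mul_le_mul_of_nonneg_right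
      (Real.rpow_le_rpow hd0.le hd2a (by linarith : (0:ℝ) ≤ 1 - α)) (by positivity)
  calc ‖f u - f v‖ ≤ (|Real.log a| + 1) * d := key
    _ ≤ (|Real.log a| + 1) * ((2 * a) ^ (1 - α) * d ^ α) := by
        have : (0:ℝ) ≤ |Real.log a| + 1 := by positivity
        exact mul_le_mul_of_nonneg_left hstep this
    _ = (|Real.log a| + 1) * (2 * a) ^ (1 - α) * d ^ α := by ring
end
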